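/- For α ∈ (0,1), β ≥ 1 − 1/α and 0 < y < 1, ∫_0^y r^{β+1/α} (1 − r^{1/α})^{−α−1} dr = y^{β+1/α+1}/(β+1/α+1) · ₂F₁(α(β+1)+1, α+1; α(β+1)+2; y^{1/α}), where ₂F₁ is the Gauss hypergeometric function given by its power series. -/

import Mathlib

open Real MeasureTheory

open Polynomial Filter Topology

noncomputable def binCoef (s : ℝ) (k : ℕ) : ℝ :=
  (ascPochhammer ℝ k).eval s / (Nat.factorial k : ℝ)

lemma asc_succ_left_eval (k : ℕ) (s : ℝ) :
    (ascPochhammer ℝ (k+1)).eval s = s * (ascPochhammer ℝ k).eval (s+1) := by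
  rw [ascPochhammer_succ_left, eval_mul, eval_X, eval_comp, eval_add, eval_X, eval_one]

lemma binCoef_zero (s : ℝ) : binCoef s 0 = 1 := by simp [binCoef]

lemma binCoef_pos {s : ℝ} (hs : 0 < s) (k : ℕ) : 0 < binCoef s k :=
  div_pos (ascPochhammer_pos k s hs) (by positivity)

lemma binCoef_succ (s : ℝ) (k : ℕ) :
    binCoef s (k+1) * (k+1) = binCoef s k * (s + k) := by
  have h : (Nat.factorial (k+1) : ℝ) = (k+1) * Nat.factorial k := by
    rw [Nat.factorial_succ]; push_cast; ring
  rw [binCoef, binCoef, ascPochhammer_succ_eval, h]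
  have hk : (Nat.factorial k : ℝ) ≠ 0 := by positivity
  field_simp

lemma binCoef_succ' (s : ℝ) (k : ℕ) :
    binCoef s (k+1) * (k+1) = s * binCoef (s+1) k := by
  have h : (Nat.factorial (k+1) : ℝ) = (k+1) * Nat.factorial k := by
    rw [Nat.factorial_succ]; push_cast; ring
  rw [binCoef, binCoef, asc_succ_left_eval, h]
  have hk : (Nat.factorial k : ℝ) ≠ 0 := by positivity
  field_simp

lemma binCoef_recur (s : ℝ) (k : ℕ) :
    binCoef (s+1) (k+1) = binCoef s (k+1) + binCoef (s+1) k := by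
  have h1 := binCoef_succ (s+1) k
  have h2 := binCoef_succ' s k
  have h3 := binCoef_succ s k
  have hk : (0:ℝ) < (k:ℝ) + 1 := by positivity
  have e : binCoef (s+1) (k+1) * (k+1) = (binCoef s (k+1) + binCoef (s+1) k) * (k+1) := by
    rw [h1]
    have : binCoef (s+1) k * (s + 1 + k) = binCoef (s+1) k * (k+1) + s * binCoef (s+1) k := by ring
    rw [this, ← h2]
    ring
  exact mul_right_cancel₀ (ne_of_gt hk) e

lemma tendsto_ratio (s : ℝ) :
    Tendsto (fun k : ℕ => (s + k) / (k + 1)) atTop (𝓝 1) := by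
  have h : ∀ k : ℕ, (s + k) / ((k:ℝ) + 1) = (s - 1) * (1 / ((k:ℝ)+1)) + 1 := by
    intro k
    have : ((k:ℝ) + 1) ≠ 0 := by positivity
    field_simp
    ring
  simp_rw [h]
  have := (tendsto_one_div_add_atTop_nhds_zero_nat).const_mul (s - 1)
  simpa using this.add tendsto_const_nhds

lemma summable_bin {s x : ℝ} (hs : 0 < s) (hx : |x| < 1) :
    Summable (fun k => binCoef s k * x ^ k) := by
  rcases eq_or_ne x 0 with rfl | hx0
  · apply summable_of_ne_finset_zero (s := {0})
    intro k hk
    have : k ≠ 0 := by simpa using hk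
    simp [zero_pow this]
  · apply summable_of_ratio_test_tendsto_lt_one hx
    · filter_upwards with k
      exact mul_ne_zero (ne_of_gt (binCoef_pos hs k)) (pow_ne_zero _ hx0)
    · have key : ∀ k : ℕ, ‖binCoef s (k+1) * x ^ (k+1)‖ / ‖binCoef s k * x ^ k‖
          = (s + k) / (k + 1) * |x| := by
        intro k
        have hb := binCoef_pos hs k
        have hb' := binCoef_pos hs (k+1)
        have hxp : (0:ℝ) < |x| := abs_pos.mpr hx0
        rw [norm_mul, norm_mul, norm_pow, norm_pow, Real.norm_eq_abs, Real.norm_eq_abs,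
          Real.norm_eq_abs, abs_of_pos hb, abs_of_pos hb', pow_succ]
        rw [div_eq_iff (by positivity)]
        have h2 : binCoef s (k+1) = binCoef s k * (s + k) / (k+1) := by
          rw [← binCoef_succ s k]; field_simp
        rw [h2]
        have hs' : (0:ℝ) < s + k := by positivity
        field_simp
      simp_rw [key]
      simpa using (tendsto_ratio s).mul_const |x|

noncomputable def binT (s x : ℝ) : ℝ := ∑' k, binCoef s k * x ^ k

lemma summable_bin_deriv {s x : ℝ} (hs : 0 < s) (hx : |x| < 1) :
    Summable (fun k : ℕ => binCoef s k * (k * x ^ (k - 1))) := by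
  rw [← summable_nat_add_iff 1]
  refine ((summable_bin (by linarith : (0:ℝ) < s + 1) hx).mul_left s).congr fun k => ?_
  have h := binCoef_succ' s k
  push_cast at h
  simp only [Nat.add_sub_cancel]
  push_cast
  linear_combination (-(x ^ k)) * h

lemma hasDerivAt_binT {s x : ℝ} (hs : 0 < s) (hx : |x| < 1) :
    HasDerivAt (fun z => binT s z) (s * binT (s+1) x) x := by
  set r : ℝ := (|x| + 1) / 2 with hr
  have hr0 : 0 < r := by positivity
  have hxr : |x| < r := by rw [hr]; linarith
  have hr1 : r < 1 := by rw [hr]; linarith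
  have hrabs : |r| < 1 := by rwa [abs_of_pos hr0]
  have hu : Summable (fun k : ℕ => binCoef s k * (k * r ^ (k - 1))) :=
    summable_bin_deriv hs hrabs
  have hmem : x ∈ Set.Ioo (-r) r := by
    have := abs_lt.mp hxr; exact ⟨this.1, this.2⟩
  have key := hasDerivAt_tsum_of_isPreconnected hu (isOpen_Ioo (a := -r) (b := r))
    (convex_Ioo _ _).isPreconnected
    (g := fun k z => binCoef s k * z ^ k)
    (g' := fun k z => binCoef s k * (k * z ^ (k - 1)))
    (fun k z _ => (hasDerivAt_pow k z).const_mul (binCoef s k))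
    (fun k z hz => by
      have hzr : |z| ≤ r := le_of_lt (abs_lt.mpr ⟨hz.1, hz.2⟩)
      have hb := binCoef_pos hs k
      rw [Real.norm_eq_abs, abs_mul, abs_mul, abs_of_pos hb, Nat.abs_cast, abs_pow]
      gcongr)
    hmem (summable_bin hs hx) hmem
  have hsum : ∑' k : ℕ, binCoef s k * (k * x ^ (k - 1)) = s * binT (s+1) x := by
    rw [Summable.tsum_eq_zero_add (summable_bin_deriv hs hx)]
    simp only [Nat.cast_zero, zero_mul, mul_zero, zero_add, Nat.cast_add, Nat.cast_one,
      Nat.add_sub_cancel]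
    rw [binT, ← tsum_mul_left]
    refine tsum_congr fun k => ?_
    have h := binCoef_succ' s k
    push_cast at h ⊢
    linear_combination x ^ k * h
  rw [← hsum]
  exact key

lemma binT_zero (s : ℝ) : binT s 0 = 1 := by
  rw [binT, tsum_eq_single 0 (fun k hk => by simp [zero_pow hk])]
  simp [binCoef_zero]

lemma bin_shift {s x : ℝ} (hs : 0 < s) (hx : |x| < 1) :
    (1 - x) * binT (s+1) x = binT s x := by
  have hs1 : (0:ℝ) < s + 1 := by linarith
  have hsum1 : Summable (fun k => binCoef s k * x ^ k) := summable_bin hs hx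
  have hsum2 : Summable (fun k => binCoef (s+1) k * x ^ k) := summable_bin hs1 hx
  have hshift1 : Summable (fun k : ℕ => binCoef s (k+1) * x ^ (k+1)) := by
    exact (summable_nat_add_iff 1).mpr hsum1
  have hshift2 : Summable (fun k : ℕ => x * (binCoef (s+1) k * x ^ k)) := hsum2.mul_left x
  have hA : binT s x = 1 + ∑' k : ℕ, binCoef s (k+1) * x ^ (k+1) := by
    rw [binT, Summable.tsum_eq_zero_add hsum1, binCoef_zero]; norm_num
  have hB : binT (s+1) x = 1 + ∑' k : ℕ, binCoef (s+1) (k+1) * x ^ (k+1) := by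
    rw [binT, Summable.tsum_eq_zero_add hsum2, binCoef_zero]; norm_num
  have hsplit : ∑' k : ℕ, binCoef (s+1) (k+1) * x ^ (k+1)
      = (∑' k : ℕ, binCoef s (k+1) * x ^ (k+1))
        + ∑' k : ℕ, x * (binCoef (s+1) k * x ^ k) := by
    rw [← Summable.tsum_add hshift1 hshift2]
    exact tsum_congr fun k => by rw [binCoef_recur s k]; ring
  have hmul : ∑' k : ℕ, x * (binCoef (s+1) k * x ^ k) = x * binT (s+1) x := by
    rw [binT, tsum_mul_left]
  linear_combination hB + hsplit + hmul - hA

lemma binomial_rpow {s x : ℝ} (hs : 0 < s) (hx0 : 0 ≤ x) (hx : x < 1) :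
    binT s x = (1 - x) ^ (-s) := by
  set F : ℝ → ℝ := fun z => binT s z * (1 - z) ^ s with hF
  have habs : ∀ z ∈ Set.Icc (0:ℝ) x, |z| < 1 := by
    intro z hz
    rw [abs_of_nonneg hz.1]
    exact lt_of_le_of_lt hz.2 hx
  have hderiv : ∀ z ∈ Set.Icc (0:ℝ) x, HasDerivAt F 0 z := by
    intro z hz
    have hz1 : |z| < 1 := habs z hz
    have hz1' : z < 1 := lt_of_le_of_lt (le_abs_self z) hz1
    have h1z : (0:ℝ) < 1 - z := by linarith
    have hT := hasDerivAt_binT hs hz1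
    have hrpow : HasDerivAt (fun w : ℝ => (1 - w) ^ s) (s * (1 - z) ^ (s - 1) * (-1)) z := by
      have h1 : HasDerivAt (fun w : ℝ => 1 - w) (-1) z := by
        simpa using (hasDerivAt_id z).const_sub 1
      exact (Real.hasDerivAt_rpow_const (Or.inl (ne_of_gt h1z))).comp z h1
    have := hT.mul hrpow
    convert this using 1
    case e'_4 => rfl
    case e'_5 => rfl
    case e'_8 => rfl
    have e1 : (1 - z) ^ s = (1 - z) ^ (s - 1) * (1 - z) := by
      rw [← Real.rpow_add_one (ne_of_gt h1z)]
      ring_nf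
    have e2 : (1 - z) * binT (s+1) z = binT s z := bin_shift hs hz1
    rw [e1]
    linear_combination (-(s * (1 - z) ^ (s - 1))) * e2
  have hcont : ContinuousOn F (Set.Icc 0 x) :=
    fun z hz => ((hderiv z hz).continuousAt).continuousWithinAt
  have hconst : F x = F 0 :=
    constant_of_has_deriv_right_zero hcont
      (fun z hz => ((hderiv z (Set.mem_Icc_of_Ico hz)).hasDerivWithinAt)) x
      (Set.right_mem_Icc.mpr hx0)
  have hF0 : F 0 = 1 := by
    rw [hF]; simp [binT_zero]
  have h1x : (0:ℝ) < 1 - x := by linarith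
  have hne : (1 - x) ^ s ≠ 0 := ne_of_gt (Real.rpow_pos_of_pos h1x s)
  have h1 : binT s x * (1 - x) ^ s = 1 := hconst.trans hF0
  have h2 : binT s x = 1 / (1 - x) ^ s := eq_div_of_mul_eq hne h1
  rw [h2, Real.rpow_neg (le_of_lt h1x), one_div]

/-- The Gauss hypergeometric function ₂F₁ defined by its power series. -/
noncomputable def hyp2F1 (a b c z : ℝ) : ℝ :=
  ∑' k : ℕ, ((ascPochhammer ℝ k).eval a * (ascPochhammer ℝ k).eval b /
      (ascPochhammer ℝ k).eval c) * z ^ k / (Nat.factorial k : ℝ)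

theorem integral_hypergeometric (α β y : ℝ) (hα : α ∈ Set.Ioo (0:ℝ) 1)
    (hβ : 1 - 1/α ≤ β) (hy : y ∈ Set.Ioo (0:ℝ) 1) :
    ∫ r in Set.Ioo (0:ℝ) y, r ^ (β + 1/α) * (1 - r ^ (1/α)) ^ (-α - 1)
      = y ^ (β + 1/α + 1) / (β + 1/α + 1) *
          hyp2F1 (α*(β+1) + 1) (α + 1) (α*(β+1) + 2) (y ^ (1/α)) := by
  obtain ⟨hα0, hα1⟩ := hα
  obtain ⟨hy0, hy1⟩ := hy
  have hαinv : (0:ℝ) < 1/α := by positivity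
  have hq1 : (1:ℝ) ≤ β + 1/α := by
    have := hβ; linarith
  set c : ℝ := β + 1/α + 1 with hc
  have hc2 : (2:ℝ) ≤ c := by rw [hc]; linarith
  have hc0 : (0:ℝ) < c := by linarith
  set A : ℝ := α * c with hA
  have hA0 : (0:ℝ) < A := by positivity
  have hAeq : α*(β+1) + 1 = A := by rw [hA, hc]; field_simp; ring
  have hAeq2 : α*(β+1) + 2 = A + 1 := by rw [← hAeq]; ring
  set z : ℝ := y ^ (1/α) with hz
  have hz0 : 0 < z := rpow_pos_of_pos hy0 _
  have hz1 : z < 1 := by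
    rw [hz]
    exact Real.rpow_lt_one (le_of_lt hy0) hy1 hαinv
  have hs : (0:ℝ) < α + 1 := by linarith
  -- exponents
  set q : ℕ → ℝ := fun k => β + 1/α + k/α with hqdef
  have hqk : ∀ k : ℕ, -1 < q k := by
    intro k
    have : (0:ℝ) ≤ k/α := by positivity
    simp only [hqdef]; linarith
  have hqk1 : ∀ k : ℕ, q k + 1 = (A + k)/α := by
    intro k
    simp only [hqdef, hA, hc]
    field_simp
    ring
  have hqk1pos : ∀ k : ℕ, 0 < q k + 1 := by
    intro k
    rw [hqk1]
    positivity
  -- the term functions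
  set F : ℕ → ℝ → ℝ := fun k r => binCoef (α+1) k * r ^ (q k) with hFdef
  -- each term integrable
  have hint : ∀ k, IntegrableOn (F k) (Set.Ioo 0 y) volume := by
    intro k
    apply Integrable.const_mul
    exact (intervalIntegrable_iff_integrableOn_Ioo_of_le (le_of_lt hy0)).mp
      (intervalIntegral.intervalIntegrable_rpow' (hqk k))
  -- value of each term integral
  have hval : ∀ k, ∫ r in Set.Ioo (0:ℝ) y, F k r
      = binCoef (α+1) k * (y ^ (q k + 1) / (q k + 1)) := by
    intro k
    rw [← integral_Ioc_eq_integral_Ioo, ← intervalIntegral.integral_of_le (le_of_lt hy0)]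
    rw [intervalIntegral.integral_const_mul]
    rw [integral_rpow (Or.inl (hqk k))]
    rw [Real.zero_rpow (ne_of_gt (hqk1pos k))]
    ring
  -- pointwise expansion
  have hpt : ∀ r ∈ Set.Ioo (0:ℝ) y, r ^ (β + 1/α) * (1 - r ^ (1/α)) ^ (-α - 1)
      = ∑' k, F k r := by
    intro r hr
    obtain ⟨hr0, hry⟩ := hr
    have hr1 : r < 1 := lt_trans hry hy1
    have hrz0 : (0:ℝ) ≤ r ^ (1/α) := le_of_lt (rpow_pos_of_pos hr0 _)
    have hrz1 : r ^ (1/α) < 1 := Real.rpow_lt_one (le_of_lt hr0) hr1 hαinv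
    have hbin := binomial_rpow hs hrz0 hrz1
    have hexp : -(α+1) = -α - 1 := by ring
    rw [← hexp, ← hbin, binT, ← tsum_mul_left]
    refine tsum_congr fun k => ?_
    simp only [hFdef]
    have e : (r ^ (1/α)) ^ k = r ^ ((1/α) * k) := by
      rw [← Real.rpow_natCast (r ^ (1/α)) k, ← Real.rpow_mul (le_of_lt hr0)]
    have e2 : r ^ (β + 1/α) * r ^ ((1/α) * (k:ℝ)) = r ^ (q k) := by
      rw [← Real.rpow_add hr0]
      congr 1
      simp only [hqdef]
      ring
    rw [e, ← e2]
    ring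
  -- summability of integrals of norms
  have hnormval : ∀ k, ∫ r in Set.Ioo (0:ℝ) y, ‖F k r‖
      = binCoef (α+1) k * (y ^ (q k + 1) / (q k + 1)) := by
    intro k
    rw [← hval k]
    apply setIntegral_congr_fun measurableSet_Ioo
    intro r hr
    have hr0 : (0:ℝ) < r := hr.1
    have : 0 ≤ F k r := by
      simp only [hFdef]
      have := binCoef_pos hs k
      positivity
    exact norm_of_nonneg this
  have hyq : ∀ k : ℕ, y ^ (q k + 1) = y ^ c * z ^ k := by
    intro k
    rw [hz, ← Real.rpow_natCast (y ^ (1/α)) k, ← Real.rpow_mul (le_of_lt hy0),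
      ← Real.rpow_add hy0]
    congr 1
    simp only [hqdef, hc]
    ring
  have hq0c : q 0 + 1 = c := by simp [hqdef, hc]
  have hsummable : Summable (fun k => binCoef (α+1) k * (y ^ (q k + 1) / (q k + 1))) := by
    have hbase : Summable (fun k => (y ^ c / c) * (binCoef (α+1) k * z ^ k)) :=
      ((summable_bin hs (by rw [abs_of_pos hz0]; exact hz1))).mul_left _
    refine Summable.of_nonneg_of_le (fun k => ?_) (fun k => ?_) hbase
    · have := binCoef_pos hs k
      have := hqk1pos k
      have : (0:ℝ) < y ^ (q k + 1) := rpow_pos_of_pos hy0 _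
      positivity
    · rw [hyq k]
      have hb := binCoef_pos hs k
      have hck : c ≤ q k + 1 := by
        rw [← hq0c]
        simp only [hqdef]
        have : (0:ℝ) ≤ (k:ℝ)/α := by positivity
        simp only [Nat.cast_zero, zero_div]
        linarith
      have hzk : (0:ℝ) < z ^ k := pow_pos hz0 k
      have hyc : (0:ℝ) < y ^ c := rpow_pos_of_pos hy0 _
      have hrk : y ^ c / c * (binCoef (α+1) k * z ^ k)
          = binCoef (α+1) k * (y ^ c * z ^ k / c) := by ring
      rw [hrk]
      gcongr
  -- swap integral and sum
  have hswap : ∫ r in Set.Ioo (0:ℝ) y, (∑' k, F k r)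
      = ∑' k, ∫ r in Set.Ioo (0:ℝ) y, F k r := by
    refine (MeasureTheory.integral_tsum_of_summable_integral_norm (fun k => hint k) ?_).symm
    simp_rw [hnormval]
    exact hsummable
  have hLHS : ∫ r in Set.Ioo (0:ℝ) y, r ^ (β + 1/α) * (1 - r ^ (1/α)) ^ (-α - 1)
      = ∑' k, binCoef (α+1) k * (y ^ (q k + 1) / (q k + 1)) := by
    rw [setIntegral_congr_fun measurableSet_Ioo hpt, hswap]
    exact tsum_congr hval
  clear_value A c z q F
  rw [hLHS, hyp2F1, hAeq, hAeq2, ← tsum_mul_left]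
  refine tsum_congr fun k => ?_
  -- per-term identity
  have hP := ascPochhammer_pos k A hA0
  have hP' := ascPochhammer_pos k (A+1) (by linarith)
  have hQ := ascPochhammer_pos k (α+1) hs
  have hkey : (ascPochhammer ℝ k).eval A * (A + k) = A * (ascPochhammer ℝ k).eval (A+1) := by
    have h1 := ascPochhammer_succ_eval k A
    have h2 := asc_succ_left_eval k A
    rw [← h1, h2]
  rw [hyq k, hqk1 k, binCoef]
  have hfac : (0:ℝ) ≠ (Nat.factorial k : ℝ) := by positivity
  have hAk : (0:ℝ) ≠ A + k := by positivity
  have hα0' : α ≠ 0 := ne_of_gt hα0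
  have hc0' : c ≠ 0 := ne_of_gt hc0
  have hP'0 : eval (A+1) (ascPochhammer ℝ k) ≠ 0 := ne_of_gt hP'
  field_simp
  linear_combination (-1 : ℝ) * hkey
    - (Polynomial.eval (A+1) (ascPochhammer ℝ k)) * hA
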